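/- Let ν_1,...,ν_N > 0 and 1 ≤ M < N. Define the (N+1)×(N+1) matrix Φ = Γ^T Σ*^{-1} Γ, where Γ = [I_N | 1_N] and Σ* = diag(1/ν_1,...,1/ν_N) + 1_N 1_N^T. Then the minimizer of Δ^T Φ Δ over Δ ∈ R^{N+1} with first M coordinates fixed at Δ_1,...,Δ_M satisfies Δ_j = Δ̄ for j = M+1,...,N and Δ_{N+1} = −Δ̄, where Δ̄ = (Σ_{i=1}^M ν_i Δ_i)/(Σ_{i=1}^M ν_i). -/

import Mathlib

open Matrix Finset

/-- Proposition 2 (latent factor model): with `Γ = [I_N | 1_N]`,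
`Σ* = diag(1/ν) + 1 1ᵀ` and `Φ = Γᵀ Σ*⁻¹ Γ`, any minimizer of `Δᵀ Φ Δ` over
`Δ ∈ ℝ^{N+1}` with the first `M` coordinates fixed satisfies `Δ_j = Δ̄` for
`j = M+1, …, N` and `Δ_{N+1} = −Δ̄`, where `Δ̄ = (Σ_{i<M} ν_i Δ_i)/(Σ_{i<M} ν_i)`. -/
theorem latent_factor_characterization {N M : ℕ} (hM : 1 ≤ M) (hMN : M < N)
    (ν : Fin N → ℝ) (hν : ∀ i, 0 < ν i) (Δt : Fin N → ℝ) :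
    let S : Matrix (Fin N) (Fin N) ℝ :=
      Matrix.diagonal (fun i => (ν i)⁻¹) + Matrix.of (fun _ _ => (1 : ℝ))
    let Γ : Matrix (Fin N) (Fin N ⊕ Unit) ℝ :=
      Matrix.of fun i j =>
        Sum.elim (fun k => if i = k then (1 : ℝ) else 0) (fun _ => (1 : ℝ)) j
    let Φ : Matrix (Fin N ⊕ Unit) (Fin N ⊕ Unit) ℝ := Γᵀ * S⁻¹ * Γ
    let Δbar : ℝ :=
      (∑ i ∈ Finset.univ.filter (fun i : Fin N => (i : ℕ) < M), ν i * Δt i) /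
        (∑ i ∈ Finset.univ.filter (fun i : Fin N => (i : ℕ) < M), ν i)
    ∀ Δ : Fin N ⊕ Unit → ℝ,
      (∀ i : Fin N, (i : ℕ) < M → Δ (Sum.inl i) = Δt i) →
      (∀ Δ' : Fin N ⊕ Unit → ℝ, (∀ i : Fin N, (i : ℕ) < M → Δ' (Sum.inl i) = Δt i) →
        Δ ⬝ᵥ (Φ *ᵥ Δ) ≤ Δ' ⬝ᵥ (Φ *ᵥ Δ')) →
      (∀ j : Fin N, M ≤ (j : ℕ) → Δ (Sum.inl j) = Δbar) ∧
      Δ (Sum.inr ()) = -Δbar := by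
  intro S Γ Φ Δbar Δ hfix hmin
  -- basic facts
  set F : Finset (Fin N) := Finset.univ.filter (fun i : Fin N => (i : ℕ) < M) with hF
  have hi0 : (⟨0, by omega⟩ : Fin N) ∈ F := by
    simp only [hF, Finset.mem_filter, Finset.mem_univ, true_and]
    omega
  have hVpos : 0 < ∑ i ∈ F, ν i :=
    Finset.sum_pos (fun i _ => hν i) ⟨_, hi0⟩
  -- Γ acting on vectors
  have hΓ : ∀ v : Fin N ⊕ Unit → ℝ, ∀ k : Fin N,
      (Γ *ᵥ v) k = v (Sum.inl k) + v (Sum.inr ()) := by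
    intro v k
    simp only [Matrix.mulVec, dotProduct, Γ, Matrix.of_apply]
    rw [Fintype.sum_sum_type]
    simp [Finset.sum_ite_eq]
  -- S is positive definite
  have hmulS : ∀ x : Fin N → ℝ, ∀ k, (S *ᵥ x) k = (ν k)⁻¹ * x k + ∑ j, x j := by
    intro x k
    simp only [S, Matrix.add_mulVec, Pi.add_apply, Matrix.mulVec_diagonal]
    congr 1
    simp [Matrix.mulVec, dotProduct]
  have hSsymm : S.IsHermitian := by
    unfold Matrix.IsHermitian
    ext i j
    simp only [S, Matrix.conjTranspose_apply, Matrix.add_apply, Matrix.diagonal_apply,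
      Matrix.of_apply, star_trivial]
    by_cases h : i = j <;> simp [h, eq_comm]
  have hSpd : S.PosDef := by
    refine Matrix.PosDef.of_dotProduct_mulVec_pos hSsymm (fun x hx => ?_)
    have heq : (star x) ⬝ᵥ (S *ᵥ x)
        = ∑ k, ((ν k)⁻¹ * x k ^ 2 + x k * ∑ j, x j) := by
      simp only [dotProduct, star_trivial, Pi.star_apply]
      apply Finset.sum_congr rfl
      intro k _
      rw [hmulS]
      ring
    rw [heq, Finset.sum_add_distrib, ← Finset.sum_mul]
    have hk : ∃ k, x k ≠ 0 := by
      by_contra h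
      push_neg at h
      exact hx (funext h)
    obtain ⟨k, hk⟩ := hk
    have h1 : 0 < ∑ k, (ν k)⁻¹ * x k ^ 2 := by
      apply Finset.sum_pos'
        (fun i _ => mul_nonneg (inv_nonneg.2 (hν i).le) (sq_nonneg _))
      exact ⟨k, Finset.mem_univ k,
        mul_pos (inv_pos.2 (hν k)) (pow_two_pos_of_ne_zero hk)⟩
    nlinarith [mul_self_nonneg (∑ j, x j)]
  have hSinv : S⁻¹.PosDef := hSpd.inv
  have hSinvS : S⁻¹ * S = 1 := Matrix.nonsing_inv_mul S hSpd.det_pos.ne'.isUnit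
  -- the optimal "signal" vector
  set xstar : Fin N → ℝ := fun k => if (k : ℕ) < M then Δt k - Δbar else 0 with hxstar
  set z : Fin N → ℝ := fun k => ν k * xstar k with hz
  have hsum0 : ∑ k, z k = 0 := by
    have hrestrict : ∑ k, z k = ∑ k ∈ F, z k := by
      refine (Finset.sum_subset (Finset.subset_univ F) ?_).symm
      intro k _ hk
      simp only [hF, Finset.mem_filter, Finset.mem_univ, true_and] at hk
      simp [hz, hxstar, hk]
    rw [hrestrict]
    have h2 : ∑ k ∈ F, z k = (∑ k ∈ F, ν k * Δt k) - Δbar * ∑ k ∈ F, ν k := by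
      rw [Finset.mul_sum, ← Finset.sum_sub_distrib]
      apply Finset.sum_congr rfl
      intro k hk
      simp only [hF, Finset.mem_filter] at hk
      simp only [hz, hxstar, hk.2, if_pos]
      ring
    rw [h2]
    have hbar : Δbar = (∑ k ∈ F, ν k * Δt k) / (∑ k ∈ F, ν k) := rfl
    rw [hbar, div_mul_cancel₀ _ hVpos.ne']
    ring
  have hSz : S *ᵥ z = xstar := by
    funext k
    rw [hmulS, hsum0, add_zero]
    simp only [hz]
    rw [← mul_assoc, inv_mul_cancel₀ (hν k).ne', one_mul]
  have hinvx : S⁻¹ *ᵥ xstar = z := by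
    rw [← hSz, Matrix.mulVec_mulVec, hSinvS, Matrix.one_mulVec]
  -- quadratic form identity
  have hquad : ∀ v : Fin N ⊕ Unit → ℝ,
      v ⬝ᵥ (Φ *ᵥ v) = (Γ *ᵥ v) ⬝ᵥ (S⁻¹ *ᵥ (Γ *ᵥ v)) := by
    intro v
    simp only [Φ, ← Matrix.mulVec_mulVec, Matrix.dotProduct_mulVec, Matrix.vecMul_transpose]
  -- the comparison point
  set Δ' : Fin N ⊕ Unit → ℝ :=
    Sum.elim (fun i => if (i : ℕ) < M then Δt i else Δbar) (fun _ => -Δbar) with hΔ'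
  have hΔ'fix : ∀ i : Fin N, (i : ℕ) < M → Δ' (Sum.inl i) = Δt i := by
    intro i hi; simp [hΔ', hi]
  have hΓΔ' : Γ *ᵥ Δ' = xstar := by
    funext k
    rw [hΓ]
    by_cases h : (k : ℕ) < M <;> simp [hΔ', hxstar, h, sub_eq_add_neg]
  -- decompose
  set t : ℝ := Δ (Sum.inr ()) with ht
  set y : Fin N → ℝ := fun k => (Γ *ᵥ Δ) k - xstar k with hy
  have hyk : ∀ k : Fin N, (k : ℕ) < M → y k = t + Δbar := by
    intro k hk
    simp only [hy, hΓ, hxstar, if_pos hk, hfix k hk]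
    ring
  have hzy : z ⬝ᵥ y = 0 := by
    have : ∀ k : Fin N, z k * y k = (ν k * xstar k) * (t + Δbar) := by
      intro k
      by_cases h : (k : ℕ) < M
      · rw [hyk k h]
      · simp [hz, hxstar, h]
    simp only [dotProduct, this, ← Finset.sum_mul, hsum0, zero_mul]
    rw [show (∑ i, ν i * xstar i) = ∑ k, z k from rfl, hsum0, zero_mul]
  -- symmetry of S⁻¹
  have hsymm : ∀ a b : Fin N → ℝ, a ⬝ᵥ (S⁻¹ *ᵥ b) = (S⁻¹ *ᵥ a) ⬝ᵥ b := by
    intro a b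
    rw [Matrix.dotProduct_mulVec]
    congr 1
    have hT : S⁻¹ᵀ = S⁻¹ := by
      have := hSinv.1
      rwa [Matrix.IsHermitian, Matrix.conjTranspose_eq_transpose_of_trivial] at this
    rw [← Matrix.vecMul_transpose, hT]
  -- key expansion
  have hexp : (Γ *ᵥ Δ) ⬝ᵥ (S⁻¹ *ᵥ (Γ *ᵥ Δ))
      = xstar ⬝ᵥ (S⁻¹ *ᵥ xstar) + y ⬝ᵥ (S⁻¹ *ᵥ y) := by
    have hx : Γ *ᵥ Δ = xstar + y := by
      funext k; simp [hy]
    rw [hx, Matrix.mulVec_add, dotProduct_add, add_dotProduct,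
      add_dotProduct]
    have h1 : xstar ⬝ᵥ (S⁻¹ *ᵥ y) = 0 := by
      rw [hsymm, hinvx, hzy]
    have h2 : y ⬝ᵥ (S⁻¹ *ᵥ xstar) = 0 := by
      rw [hinvx, dotProduct_comm, hzy]
    rw [h1, h2]
    ring
  -- minimality gives y ⬝ᵥ S⁻¹ y ≤ 0, hence y = 0
  have hle := hmin Δ' hΔ'fix
  rw [hquad Δ, hquad Δ', hΓΔ', hexp] at hle
  have hy0 : y = 0 := by
    by_contra hy0
    have := hSinv.dotProduct_mulVec_pos hy0
    simp only [star_trivial] at this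
    linarith
  -- conclude
  have hyk0 : ∀ k : Fin N, y k = 0 := fun k => congrFun hy0 k
  have htval : t = -Δbar := by
    have h0 : (((⟨0, by omega⟩ : Fin N)) : ℕ) < M := hM
    have := hyk _ h0
    rw [hyk0] at this
    linarith
  constructor
  · intro j hj
    have := hyk0 j
    simp only [hy, hΓ, hxstar] at this
    rw [if_neg (by omega), ← ht] at this
    have : Δ (Sum.inl j) + t = 0 := by linarith
    rw [htval] at this
    linarith
  · exact htval
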